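/- Let r_1, r_2 be nonnegative integers with r_1 + r_2 ≥ 1. Define f_1(x) := Σ_{r=1}^∞ x^{1−2r}/(2r(2r−1)), f_2(x) := Σ_{r=2}^∞ x^{2−2r}/((2r−1)(2r−2)), and R_{r_1,r_2}(x) := −(r_1 + r_2 − 1)(x·log x − x) + r_2·(log x + 1) − (r_1 + r_2)·f_1(x) − r_2·f_2(x). Then for every x ≥ 3, −(r_1 + r_2 − 1)·log x ≤ R'_{r_1,r_2}(x) ≤ −δ_{(r_1,r_2),(1,0)}·log(1 − x^{−2}) − δ_{(r_1,r_2),(0,1)}·log(1 − x^{−1}), where δ_{(r_1,r_2),(a,b)} equals 1 if (r_1,r_2) = (a,b) and 0 otherwise, and R' denotes the derivative with respect to x. -/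

import Mathlib

open Real

noncomputable section

/-- `f₁(x) := Σ_{r=1}^∞ x^{1−2r}/(2r(2r−1))`. -/
def f1 (x : ℝ) : ℝ :=
  ∑' r : ℕ, x ^ (1 - 2 * ((r : ℤ) + 1)) / ((2 * ((r : ℝ) + 1)) * (2 * ((r : ℝ) + 1) - 1))

/-- `f₂(x) := Σ_{r=2}^∞ x^{2−2r}/((2r−1)(2r−2))`. -/
def f2 (x : ℝ) : ℝ :=
  ∑' r : ℕ, x ^ (2 - 2 * ((r : ℤ) + 2)) / ((2 * ((r : ℝ) + 2) - 1) * (2 * ((r : ℝ) + 2) - 2))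

/-- `R_{r₁,r₂}(x) := −(r₁+r₂−1)(x log x − x) + r₂(log x + 1) − (r₁+r₂) f₁(x) − r₂ f₂(x)`. -/
def Rfun (r1 r2 : ℕ) (x : ℝ) : ℝ :=
  -((r1 : ℝ) + r2 - 1) * (x * Real.log x - x) + (r2 : ℝ) * (Real.log x + 1)
    - ((r1 : ℝ) + r2) * f1 x - (r2 : ℝ) * f2 x

/-- for `r₁ + r₂ ≥ 1` and `x ≥ 3`,
`−(r₁+r₂−1) log x ≤ R'_{r₁,r₂}(x) ≤ −δ_{(r₁,r₂),(1,0)} log(1−x^{−2}) − δ_{(r₁,r₂),(0,1)} log(1−x^{−1})`. -/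
lemma hasSum_odd {t : ℝ} (h : |t| < 1) :
    HasSum (fun k : ℕ => t ^ (2 * k + 1) / (2 * (k : ℝ) + 1))
      ((Real.log (1 + t) - Real.log (1 - t)) / 2) := by
  have h1 := (hasSum_log_sub_log_of_abs_lt_one h).mul_left (1/2)
  convert h1 using 1
  · rfl
  · funext k; ring
  · ring

lemma hasSum_even {t : ℝ} (h : |t| < 1) :
    HasSum (fun k : ℕ => t ^ (2 * k + 2) / (2 * (k : ℝ) + 2))
      (-(Real.log (1 - t) + Real.log (1 + t)) / 2) := by
  set term := fun n : ℕ => (-t) ^ (n + 1) / ((n : ℝ) + 1) + t ^ (n + 1) / ((n : ℝ) + 1) with hterm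
  have hts : HasSum term (-Real.log (1 + t) + -Real.log (1 - t)) := by
    have h₁ := hasSum_pow_div_log_of_abs_lt_one ((abs_neg t).trans_lt h)
    have h₂ := hasSum_pow_div_log_of_abs_lt_one h
    simpa using h₁.add h₂
  have hinj : Function.Injective (fun k : ℕ => 2 * k + 1) := by
    intro a b hab; simpa using hab
  have hvan : ∀ n, n ∉ Set.range (fun k : ℕ => 2 * k + 1) → term n = 0 := by
    intro n hn
    have hne : Even n := by
      rcases Nat.even_or_odd n with he | ho
      · exact he
      · exact absurd (by rcases ho with ⟨k, hk⟩; exact ⟨k, by simp; omega⟩) hn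
    have : Odd (n + 1) := Even.add_one hne
    rw [hterm]
    simp only []
    rw [Odd.neg_pow this]
    ring
  have := (hinj.hasSum_iff hvan).2 hts
  have h2 := this.mul_left (1/2)
  convert h2 using 1
  · rfl
  · funext k
    simp only [Function.comp, term]
    rw [Even.neg_pow ⟨k+1, by ring⟩]
    push_cast
    ring
  · ring

lemma f1_eq {x : ℝ} (hx : 1 < x) :
    f1 x = (Real.log (1 + x⁻¹) - Real.log (1 - x⁻¹)) / 2
      + x * ((Real.log (1 - x⁻¹) + Real.log (1 + x⁻¹)) / 2) := by
  have hx0 : x ≠ 0 := by positivity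
  have ht : |x⁻¹| < 1 := by
    rw [abs_of_pos (by positivity)]
    exact inv_lt_one_of_one_lt₀ hx
  have hodd := hasSum_odd ht
  have heven := (hasSum_even ht).mul_left x
  have hsum := hodd.sub heven
  have hterm : ∀ r : ℕ,
      x ^ (1 - 2 * ((r : ℤ) + 1)) / ((2 * ((r : ℝ) + 1)) * (2 * ((r : ℝ) + 1) - 1))
        = x⁻¹ ^ (2 * r + 1) / (2 * (r : ℝ) + 1) - x * (x⁻¹ ^ (2 * r + 2) / (2 * (r : ℝ) + 2)) := by
    intro r
    have he : (1 - 2 * ((r : ℤ) + 1)) = -((2 * r + 1 : ℕ) : ℤ) := by push_cast; ring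
    have hp : x ^ (1 - 2 * ((r : ℤ) + 1)) = x⁻¹ ^ (2 * r + 1) := by
      rw [he, zpow_neg, zpow_natCast, inv_pow]
    rw [hp]
    have hr : (0:ℝ) ≤ (r:ℝ) := Nat.cast_nonneg r
    have hu0 : x⁻¹ ≠ 0 := inv_ne_zero hx0
    have h1 : (2 * ((r : ℝ) + 1)) ≠ 0 := by positivity
    have h2 : (2 * ((r : ℝ) + 1) - 1) ≠ 0 := by intro hc; nlinarith
    have h3 : (2 * (r : ℝ) + 1) ≠ 0 := by positivity
    have h4 : (2 * (r : ℝ) + 2) ≠ 0 := by positivity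
    rw [show x = (x⁻¹)⁻¹ from (inv_inv x).symm, pow_succ]
    field_simp
    have hxx : x ^ 2 * x⁻¹ ^ 2 = 1 := by field_simp
    linear_combination x⁻¹ ^ (2 * r) * (1 + 2 * (r : ℝ)) ^ 2 * hxx
  have : f1 x = ∑' r : ℕ, (x⁻¹ ^ (2 * r + 1) / (2 * (r : ℝ) + 1)
      - x * (x⁻¹ ^ (2 * r + 2) / (2 * (r : ℝ) + 2))) := by
    unfold f1
    exact tsum_congr hterm
  rw [this, hsum.tsum_eq]
  ring

lemma f2_eq {x : ℝ} (hx : 1 < x) :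
    f2 x = -(Real.log (1 - x⁻¹) + Real.log (1 + x⁻¹)) / 2
      - x * ((Real.log (1 + x⁻¹) - Real.log (1 - x⁻¹)) / 2 - x⁻¹) := by
  have hx0 : x ≠ 0 := by positivity
  have ht : |x⁻¹| < 1 := by
    rw [abs_of_pos (by positivity)]
    exact inv_lt_one_of_one_lt₀ hx
  have hodd := hasSum_odd ht
  have hodd' : HasSum (fun k : ℕ => x⁻¹ ^ (2 * (k + 1) + 1) / (2 * ((k : ℝ) + 1) + 1))
      ((Real.log (1 + x⁻¹) - Real.log (1 - x⁻¹)) / 2 - x⁻¹) := by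
    have h := (hasSum_nat_add_iff' (f := fun k : ℕ => x⁻¹ ^ (2 * k + 1) / (2 * (k : ℝ) + 1)) 1).2 hodd
    convert h using 1
    · rfl
    · funext k; push_cast; ring_nf
    · simp
  have heven := hasSum_even ht
  have hsum := heven.sub (hodd'.mul_left x)
  have hterm : ∀ r : ℕ,
      x ^ (2 - 2 * ((r : ℤ) + 2)) / ((2 * ((r : ℝ) + 2) - 1) * (2 * ((r : ℝ) + 2) - 2))
        = x⁻¹ ^ (2 * r + 2) / (2 * (r : ℝ) + 2)
          - x * (x⁻¹ ^ (2 * (r + 1) + 1) / (2 * ((r : ℝ) + 1) + 1)) := by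
    intro r
    have he : (2 - 2 * ((r : ℤ) + 2)) = -((2 * r + 2 : ℕ) : ℤ) := by push_cast; ring
    have hp : x ^ (2 - 2 * ((r : ℤ) + 2)) = x⁻¹ ^ (2 * r + 2) := by
      rw [he, zpow_neg, zpow_natCast, inv_pow]
    rw [hp]
    have hr : (0:ℝ) ≤ (r:ℝ) := Nat.cast_nonneg r
    have hu0 : x⁻¹ ≠ 0 := inv_ne_zero hx0
    have h1 : (2 * ((r : ℝ) + 2) - 1) ≠ 0 := by intro hc; nlinarith
    have h2 : (2 * ((r : ℝ) + 2) - 2) ≠ 0 := by intro hc; nlinarith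
    have h3 : (2 * (r : ℝ) + 2) ≠ 0 := by positivity
    have h4 : (2 * ((r : ℝ) + 1) + 1) ≠ 0 := by positivity
    rw [show x = (x⁻¹)⁻¹ from (inv_inv x).symm, show 2 * (r + 1) + 1 = (2 * r + 2) + 1 from by ring, pow_succ]
    field_simp
    have hxx : x ^ 2 * x⁻¹ ^ 2 = 1 := by field_simp
    have hq : (1 + (r : ℝ)) * (1 + (r : ℝ))⁻¹ = 1 := by field_simp
    linear_combination x⁻¹ * x⁻¹ ^ (2 * r) * (3 + 2 * (r : ℝ)) * hq
      + x⁻¹ * x⁻¹ ^ (2 * r) * (6 + 10 * (r : ℝ) + 4 * (r : ℝ) ^ 2) * hxx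
  have : f2 x = ∑' r : ℕ, (x⁻¹ ^ (2 * r + 2) / (2 * (r : ℝ) + 2)
      - x * (x⁻¹ ^ (2 * (r + 1) + 1) / (2 * ((r : ℝ) + 1) + 1))) := by
    unfold f2
    exact tsum_congr hterm
  rw [this, hsum.tsum_eq]

lemma main_deriv (r1 r2 : ℕ) {x : ℝ} (hx : 3 ≤ x) :
    deriv (Rfun r1 r2) x = -((r1 : ℝ) + r2 - 1) * Real.log x
      - (((r1 : ℝ) + r2) / 2) * (Real.log (1 + x⁻¹) + Real.log (1 - x⁻¹))
      + ((r2 : ℝ) / 2) * (Real.log (1 + x⁻¹) - Real.log (1 - x⁻¹)) := by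
  have hx1 : (1 : ℝ) < x := by linarith
  have hx0 : x ≠ 0 := by positivity
  have hxp : (0 : ℝ) < x := by linarith
  have ht1 : x⁻¹ < 1 := inv_lt_one_of_one_lt₀ hx1
  have ht0 : 0 < x⁻¹ := by positivity
  have h1p : (1 : ℝ) + x⁻¹ ≠ 0 := by positivity
  have h1m : (1 : ℝ) - x⁻¹ ≠ 0 := by intro hc; nlinarith
  have hp1 : x + 1 ≠ 0 := by positivity
  have hm1 : x - 1 ≠ 0 := by intro hc; nlinarith
  -- closed forms
  set G1 : ℝ → ℝ := fun y => (Real.log (1 + y⁻¹) - Real.log (1 - y⁻¹)) / 2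
      + y * ((Real.log (1 - y⁻¹) + Real.log (1 + y⁻¹)) / 2) with hG1
  set G2 : ℝ → ℝ := fun y => -(Real.log (1 - y⁻¹) + Real.log (1 + y⁻¹)) / 2
      - y * ((Real.log (1 + y⁻¹) - Real.log (1 - y⁻¹)) / 2 - y⁻¹) with hG2
  set G : ℝ → ℝ := fun y => -((r1 : ℝ) + r2 - 1) * (y * Real.log y - y) + (r2 : ℝ) * (Real.log y + 1)
      - ((r1 : ℝ) + r2) * G1 y - (r2 : ℝ) * G2 y with hG
  have hEq : Rfun r1 r2 =ᶠ[nhds x] G := by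
    filter_upwards [isOpen_Ioi.mem_nhds (show x ∈ Set.Ioi (1:ℝ) from hx1)] with y hy
    have hy1 : (1 : ℝ) < y := hy
    rw [Rfun, hG, f1_eq hy1, f2_eq hy1]
  -- derivatives of pieces
  have hinv : HasDerivAt (fun y : ℝ => y⁻¹) (-(x ^ 2)⁻¹) x := hasDerivAt_inv hx0
  have hA : HasDerivAt (fun y : ℝ => 1 + y⁻¹) (-(x ^ 2)⁻¹) x := hinv.const_add 1
  have hB : HasDerivAt (fun y : ℝ => 1 - y⁻¹) ((x ^ 2)⁻¹) x := by
    simpa using hinv.const_sub 1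
  have hLA : HasDerivAt (fun y : ℝ => Real.log (1 + y⁻¹)) (-(x ^ 2)⁻¹ / (1 + x⁻¹)) x :=
    hA.log h1p
  have hLB : HasDerivAt (fun y : ℝ => Real.log (1 - y⁻¹)) ((x ^ 2)⁻¹ / (1 - x⁻¹)) x :=
    hB.log h1m
  have hlog : HasDerivAt Real.log x⁻¹ x := Real.hasDerivAt_log hx0
  have hxlog : HasDerivAt (fun y : ℝ => y * Real.log y - y) (Real.log x) x := by
    have h := ((hasDerivAt_id x).mul hlog).sub (hasDerivAt_id x)
    convert h using 1
    rfl
    rfl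
    rfl
    field_simp
    simp
  have hid : HasDerivAt (fun y : ℝ => y) 1 x := hasDerivAt_id x
  have hx2 : (x:ℝ)^2 ≠ 0 := by positivity
  have hG1' : HasDerivAt G1 ((Real.log (1 - x⁻¹) + Real.log (1 + x⁻¹)) / 2) x := by
    have h := ((hLA.sub hLB).div_const 2).add
      (hid.mul ((hLB.add hLA).div_const 2))
    have key : (Real.log (1 - x⁻¹) + Real.log (1 + x⁻¹)) / 2
        = (-(x ^ 2)⁻¹ / (1 + x⁻¹) - (x ^ 2)⁻¹ / (1 - x⁻¹)) / 2
          + (1 * ((Real.log (1 - x⁻¹) + Real.log (1 + x⁻¹)) / 2)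
            + x * (((x ^ 2)⁻¹ / (1 - x⁻¹) + -(x ^ 2)⁻¹ / (1 + x⁻¹)) / 2)) := by
      field_simp
      ring
    rw [hG1, key]
    convert h using 1
    rfl
    rfl
    rfl
    rfl
  have hG2' : HasDerivAt G2 (x⁻¹ - (Real.log (1 + x⁻¹) - Real.log (1 - x⁻¹)) / 2) x := by
    have h := (((hLB.add hLA).div_const 2).neg).sub
      (hid.mul (((hLA.sub hLB).div_const 2).sub hinv))
    have key : x⁻¹ - (Real.log (1 + x⁻¹) - Real.log (1 - x⁻¹)) / 2
        = -(((x ^ 2)⁻¹ / (1 - x⁻¹) + -(x ^ 2)⁻¹ / (1 + x⁻¹)) / 2)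
          - (1 * ((Real.log (1 + x⁻¹) - Real.log (1 - x⁻¹)) / 2 - x⁻¹)
            + x * ((-(x ^ 2)⁻¹ / (1 + x⁻¹) - (x ^ 2)⁻¹ / (1 - x⁻¹)) / 2 - -(x ^ 2)⁻¹)) := by
      field_simp
      ring
    rw [hG2, key]
    convert h using 1
    rfl
    rfl
    funext y; simp only [Pi.neg_apply, Pi.sub_apply, Pi.mul_apply, Pi.add_apply]; ring
    rfl
  have hG' : HasDerivAt G (-((r1 : ℝ) + r2 - 1) * Real.log x
      - (((r1 : ℝ) + r2) / 2) * (Real.log (1 + x⁻¹) + Real.log (1 - x⁻¹))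
      + ((r2 : ℝ) / 2) * (Real.log (1 + x⁻¹) - Real.log (1 - x⁻¹))) x := by
    have h := (((hxlog.const_mul (-((r1 : ℝ) + r2 - 1))).add
        ((hlog.add_const 1).const_mul (r2 : ℝ))).sub
        (hG1'.const_mul ((r1 : ℝ) + r2))).sub (hG2'.const_mul (r2 : ℝ))
    rw [hG]
    convert h using 1
    rfl
    rfl
    rfl
    ring
  rw [hEq.deriv_eq, hG'.deriv]

theorem statement_8 (r1 r2 : ℕ) (h : 1 ≤ r1 + r2) (x : ℝ) (hx : 3 ≤ x) :
    -((r1 : ℝ) + r2 - 1) * Real.log x ≤ deriv (Rfun r1 r2) x ∧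
    deriv (Rfun r1 r2) x
      ≤ -(if (r1, r2) = (1, 0) then (1 : ℝ) else 0) * Real.log (1 - x ^ (-2 : ℤ))
        - (if (r1, r2) = (0, 1) then (1 : ℝ) else 0) * Real.log (1 - x⁻¹) := by
  have hx1 : (1 : ℝ) < x := by linarith
  have hx0 : x ≠ 0 := by positivity
  have ht1 : x⁻¹ < 1 := inv_lt_one_of_one_lt₀ hx1
  have ht0 : 0 < x⁻¹ := by positivity
  have h1p : (1 : ℝ) + x⁻¹ ≠ 0 := by positivity
  have h1m : (1 : ℝ) - x⁻¹ ≠ 0 := by intro hc; nlinarith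
  have hm1 : x - 1 ≠ 0 := by intro hc; nlinarith
  set L1 := Real.log (1 + x⁻¹) with hL1def
  set L2 := Real.log (1 - x⁻¹) with hL2def
  have hL1 : 0 ≤ L1 := Real.log_nonneg (by linarith)
  have hL2 : L2 ≤ 0 := Real.log_nonpos (by linarith) (by linarith)
  have hL12 : L1 + L2 ≤ 0 := by
    rw [hL1def, hL2def, ← Real.log_mul h1p h1m]
    exact Real.log_nonpos (by nlinarith) (by nlinarith)
  have hlogx : 0 ≤ Real.log x := Real.log_nonneg (by linarith)
  have hhalf : -L2 ≤ Real.log x / 2 := by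
    have hsub : L2 = Real.log (x - 1) - Real.log x := by
      rw [hL2def, show (1:ℝ) - x⁻¹ = (x-1)/x by field_simp, Real.log_div hm1 hx0]
    have hle : Real.log x ≤ Real.log ((x - 1) ^ 2) :=
      Real.log_le_log (by linarith) (by nlinarith)
    rw [Real.log_pow] at hle
    push_cast at hle
    linarith
  rw [main_deriv r1 r2 hx, ← hL1def, ← hL2def]
  have hr1 : (0:ℝ) ≤ r1 := Nat.cast_nonneg r1
  have hr2 : (0:ℝ) ≤ r2 := Nat.cast_nonneg r2
  constructor
  · nlinarith [mul_nonneg hr1 (neg_nonneg.2 hL12), mul_nonneg hr2 (neg_nonneg.2 hL2)]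
  · have hz : Real.log (1 - x ^ (-2 : ℤ)) = L1 + L2 := by
      have hzz : (1:ℝ) - x ^ (-2 : ℤ) = (1 + x⁻¹) * (1 - x⁻¹) := by
        rw [show ((-2 : ℤ)) = -(2:ℤ) from rfl, zpow_neg, show ((2:ℤ)) = ((2:ℕ):ℤ) from rfl,
          zpow_natCast]
        field_simp
        ring
      rw [hzz, Real.log_mul h1p h1m, hL1def, hL2def]
    by_cases h10 : (r1, r2) = (1, 0)
    · simp only [Prod.mk.injEq] at h10
      obtain ⟨e1, e2⟩ := h10
      subst e1; subst e2
      rw [hz]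
      norm_num
      linarith
    · by_cases h01 : (r1, r2) = (0, 1)
      · simp only [Prod.mk.injEq] at h01
        obtain ⟨e1, e2⟩ := h01
        subst e1; subst e2
        norm_num
        linarith
      · rw [if_neg h10, if_neg h01]
        simp only [Prod.mk.injEq, not_and] at h10 h01
        have h2le : 2 ≤ r1 + r2 := by omega
        have hc : (2:ℝ) ≤ (r1:ℝ) + r2 := by exact_mod_cast h2le
        have hA : 0 ≤ (r1:ℝ) * L1 := mul_nonneg hr1 hL1
        have hB : 0 ≤ ((r1:ℝ) + 2 * r2) * (Real.log x / 2 + L2) :=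
          mul_nonneg (by linarith) (by linarith)
        have hC : 0 ≤ (3 * (r1:ℝ) + 2 * r2 - 4) * Real.log x :=
          mul_nonneg (by linarith) hlogx
        nlinarith [hA, hB, hC]
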